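/- Uniqueness of the one-soliton solution: let ζ ∈ (−1,0) ∪ (0,1) be real and γ ≥ 0, and let a, b ∈ ℂ. Define h(z) = a + b/(z−ζ) for z ∈ ℂ∖{ζ}. Suppose h satisfies the pole condition b = −ζγ·h(ζ⁻¹), the normalization h(0)·a = 1 (note a = lim_{z→∞} h(z)), and h(0) is a positive real number. Then h coincides with the one-soliton function f, i.e. h(z) = f(z) for all z ∈ ℂ∖{ζ}. -/

import Mathlib

open Filter Topology

/-- The one-soliton function for the Toda lattice with eigenvalue parameter `ζ`
and norming constant `γ`. -/
noncomputable def solitonF (ζ γ : ℝ) (z : ℂ) : ℂ :=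
  ((γ : ℂ) * (ζ : ℂ) ^ 2 * (z - ((ζ : ℂ))⁻¹) / (z - (ζ : ℂ)) + 1 - (ζ : ℂ) ^ 2) /
    ((Real.sqrt (1 - ζ ^ 2 + γ) * Real.sqrt (1 - ζ ^ 2 + γ * ζ ^ 2) : ℝ) : ℂ)

/-- Uniqueness of the one-soliton solution: if `h(z) = a + b/(z-ζ)` satisfies the pole
condition `b = -ζγ h(ζ⁻¹)`, the normalization `h(0) a = 1`, and `h(0)` is a positive real
number, then `h` coincides with the one-soliton function `f`. -/
theorem soliton_uniqueness (ζ γ : ℝ)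
    (hζ : ζ ∈ Set.Ioo (-1 : ℝ) 0 ∪ Set.Ioo (0 : ℝ) 1) (hγ : 0 ≤ γ) (a b : ℂ)
    (hpole : b = -(ζ : ℂ) * (γ : ℂ) * (a + b / (((ζ : ℂ))⁻¹ - (ζ : ℂ))))
    (hnorm : (a + b / ((0 : ℂ) - (ζ : ℂ))) * a = 1)
    (hpos : ∃ r : ℝ, 0 < r ∧ a + b / ((0 : ℂ) - (ζ : ℂ)) = (r : ℂ)) :
    ∀ z : ℂ, z ≠ (ζ : ℂ) → a + b / (z - (ζ : ℂ)) = solitonF ζ γ z := by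
  obtain ⟨r, hrpos, hr⟩ := hpos
  have hζ0 : ζ ≠ 0 := by
    rcases hζ with h | h
    · exact ne_of_lt h.2
    · exact ne_of_gt h.1
  have h1 : 0 < 1 - ζ ^ 2 := by
    rcases hζ with h | h <;> nlinarith [h.1, h.2]
  have hp : 0 < 1 - ζ ^ 2 + γ := by linarith
  have hq : 0 < 1 - ζ ^ 2 + γ * ζ ^ 2 := by nlinarith [sq_nonneg ζ]
  set s := Real.sqrt (1 - ζ ^ 2 + γ) with hs_def
  set t := Real.sqrt (1 - ζ ^ 2 + γ * ζ ^ 2) with ht_def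
  have hs0 : 0 < s := Real.sqrt_pos.mpr hp
  have ht0 : 0 < t := Real.sqrt_pos.mpr hq
  have hs2 : s ^ 2 = 1 - ζ ^ 2 + γ := Real.sq_sqrt hp.le
  have ht2 : t ^ 2 = 1 - ζ ^ 2 + γ * ζ ^ 2 := Real.sq_sqrt hq.le
  have hζC : (ζ : ℂ) ≠ 0 := by exact_mod_cast hζ0
  have h1C : (1 : ℂ) - (ζ : ℂ) ^ 2 ≠ 0 := by
    have : ((1 - ζ ^ 2 : ℝ) : ℂ) ≠ 0 := by exact_mod_cast h1.ne'
    push_cast at this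
    exact this
  have hsC : ((s : ℝ) : ℂ) ≠ 0 := by exact_mod_cast hs0.ne'
  have htC : ((t : ℝ) : ℂ) ≠ 0 := by exact_mod_cast ht0.ne'
  have hpC : ((1 - ζ ^ 2 + γ : ℝ) : ℂ) ≠ 0 := Complex.ofReal_ne_zero.mpr hp.ne'
  have hdζ : ((ζ : ℂ))⁻¹ - (ζ : ℂ) = ((1 : ℂ) - (ζ : ℂ) ^ 2) / (ζ : ℂ) := by
    field_simp
  have hd : ((ζ : ℂ))⁻¹ - (ζ : ℂ) ≠ 0 := by
    rw [hdζ]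
    exact div_ne_zero h1C hζC
  -- pole condition cleared of denominators
  have hbq : b * ((1 : ℂ) - (ζ : ℂ) ^ 2 + (γ : ℂ) * (ζ : ℂ) ^ 2) =
      -(ζ : ℂ) * (γ : ℂ) * ((1 : ℂ) - (ζ : ℂ) ^ 2) * a := by
    rw [hdζ] at hpole
    field_simp at hpole
    linear_combination hpole
  -- h(0) in cleared form
  have hzden : (0 : ℂ) - (ζ : ℂ) ≠ 0 := by simpa using neg_ne_zero.mpr hζC
  have hnorm' : ((ζ : ℂ) * a - b) * a = (ζ : ℂ) := by
    field_simp [hζC] at hnorm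
    linear_combination -hnorm
  have hr' : (ζ : ℂ) * a - b = (ζ : ℂ) * (r : ℂ) := by
    field_simp [hζC] at hr
    linear_combination -hr
  -- a * p = r * q
  have ha_p : a * ((1 : ℂ) - (ζ : ℂ) ^ 2 + (γ : ℂ)) =
      (r : ℂ) * ((1 : ℂ) - (ζ : ℂ) ^ 2 + (γ : ℂ) * (ζ : ℂ) ^ 2) := by
    have h2 : (ζ : ℂ) * (a * ((1 : ℂ) - (ζ : ℂ) ^ 2 + (γ : ℂ))) =
        (ζ : ℂ) * ((r : ℂ) * ((1 : ℂ) - (ζ : ℂ) ^ 2 + (γ : ℂ) * (ζ : ℂ) ^ 2)) := by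
      linear_combination ((1 : ℂ) - (ζ : ℂ) ^ 2 + (γ : ℂ) * (ζ : ℂ) ^ 2) * hr' + hbq
    exact mul_left_cancel₀ hζC h2
  -- a^2 * p = q
  have ha2 : a ^ 2 * ((1 : ℂ) - (ζ : ℂ) ^ 2 + (γ : ℂ)) =
      (1 : ℂ) - (ζ : ℂ) ^ 2 + (γ : ℂ) * (ζ : ℂ) ^ 2 := by
    have h2 : (ζ : ℂ) * (a ^ 2 * ((1 : ℂ) - (ζ : ℂ) ^ 2 + (γ : ℂ))) =
        (ζ : ℂ) * ((1 : ℂ) - (ζ : ℂ) ^ 2 + (γ : ℂ) * (ζ : ℂ) ^ 2) := by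
      linear_combination ((1 : ℂ) - (ζ : ℂ) ^ 2 + (γ : ℂ) * (ζ : ℂ) ^ 2) * hnorm' + a * hbq
    exact mul_left_cancel₀ hζC h2
  -- r^2 * q = p  (real)
  have hrq : r ^ 2 * (1 - ζ ^ 2 + γ * ζ ^ 2) = 1 - ζ ^ 2 + γ := by
    have hC : ((r ^ 2 * (1 - ζ ^ 2 + γ * ζ ^ 2) : ℝ) : ℂ) = ((1 - ζ ^ 2 + γ : ℝ) : ℂ) := by
      push_cast
      have h2 : (r : ℂ) ^ 2 * ((1 : ℂ) - (ζ : ℂ) ^ 2 + (γ : ℂ) * (ζ : ℂ) ^ 2) *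
            ((1 : ℂ) - (ζ : ℂ) ^ 2 + (γ : ℂ) * (ζ : ℂ) ^ 2) =
          ((1 : ℂ) - (ζ : ℂ) ^ 2 + (γ : ℂ)) *
            ((1 : ℂ) - (ζ : ℂ) ^ 2 + (γ : ℂ) * (ζ : ℂ) ^ 2) := by
        linear_combination (-(a * ((1 : ℂ) - (ζ : ℂ) ^ 2 + (γ : ℂ)) +
          (r : ℂ) * ((1 : ℂ) - (ζ : ℂ) ^ 2 + (γ : ℂ) * (ζ : ℂ) ^ 2))) * ha_p +
          ((1 : ℂ) - (ζ : ℂ) ^ 2 + (γ : ℂ)) * ha2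
      have hqC : ((1 - ζ ^ 2 + γ * ζ ^ 2 : ℝ) : ℂ) ≠ 0 := Complex.ofReal_ne_zero.mpr hq.ne'
      push_cast at hqC
      exact mul_right_cancel₀ hqC h2
    exact_mod_cast hC
  -- r * t = s
  have hrt : r * t = s := by
    have h2 : (r * t) ^ 2 = s ^ 2 := by
      rw [mul_pow, ht2, hs2]
      linarith [hrq]
    have hrt0 : 0 < r * t := mul_pos hrpos ht0
    nlinarith [h2, hrt0, hs0]
  -- r * q * s = t * p  (real)
  have hkey : r * (1 - ζ ^ 2 + γ * ζ ^ 2) * s = t * (1 - ζ ^ 2 + γ) := by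
    calc r * (1 - ζ ^ 2 + γ * ζ ^ 2) * s = r * t ^ 2 * s := by rw [ht2]
    _ = (r * t) * (t * s) := by ring
    _ = s * (t * s) := by rw [hrt]
    _ = t * s ^ 2 := by ring
    _ = t * (1 - ζ ^ 2 + γ) := by rw [hs2]
  have hkeyC : (r : ℂ) * ((1 : ℂ) - (ζ : ℂ) ^ 2 + (γ : ℂ) * (ζ : ℂ) ^ 2) * (s : ℂ) =
      (t : ℂ) * ((1 : ℂ) - (ζ : ℂ) ^ 2 + (γ : ℂ)) := by
    have := congrArg (fun x : ℝ => (x : ℂ)) hkey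
    push_cast at this
    linear_combination this
  -- a * s = t
  have haC : a * (s : ℂ) = (t : ℂ) := by
    have h2 : a * (s : ℂ) * ((1 : ℂ) - (ζ : ℂ) ^ 2 + (γ : ℂ)) =
        (t : ℂ) * ((1 : ℂ) - (ζ : ℂ) ^ 2 + (γ : ℂ)) := by
      linear_combination (s : ℂ) * ha_p + hkeyC
    have hpC' : ((1 : ℂ) - (ζ : ℂ) ^ 2 + (γ : ℂ)) ≠ 0 := by
      push_cast at hpC
      exact hpC
    exact mul_right_cancel₀ hpC' h2
  -- b * s * t = -ζ γ (1 - ζ^2)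
  have ht2C : ((t : ℂ)) ^ 2 = (1 : ℂ) - (ζ : ℂ) ^ 2 + (γ : ℂ) * (ζ : ℂ) ^ 2 := by
    have := congrArg (fun x : ℝ => (x : ℂ)) ht2
    push_cast at this
    linear_combination this
  have hbC : b * (s : ℂ) * (t : ℂ) = -(ζ : ℂ) * (γ : ℂ) * ((1 : ℂ) - (ζ : ℂ) ^ 2) := by
    have h2 : b * (s : ℂ) * (t : ℂ) * (t : ℂ) =
        -(ζ : ℂ) * (γ : ℂ) * ((1 : ℂ) - (ζ : ℂ) ^ 2) * (t : ℂ) := by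
      linear_combination (s : ℂ) * hbq + b * (s : ℂ) * ht2C -
        (ζ : ℂ) * (γ : ℂ) * ((1 : ℂ) - (ζ : ℂ) ^ 2) * haC
    exact mul_right_cancel₀ htC h2
  -- finish
  intro z hz
  have hz' : z - (ζ : ℂ) ≠ 0 := sub_ne_zero.mpr hz
  unfold solitonF
  push_cast
  rw [← hs_def, ← ht_def]
  field_simp
  linear_combination ((t : ℂ) * (z - (ζ : ℂ))) * haC + hbC + (z - (ζ : ℂ)) * ht2C
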